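/- For $\overline{f}=(x-\alpha)^d$ and monic $\overline{g}$ of degree $e>d-1$, the $(d-1)$-st subresultant is the truncated Taylor expansion of $\overline{g}$ at $\alpha$: $\mathrm{Sres}_{d-1}((x-\alpha)^d,\overline{g})=\sum_{j=0}^{d-1}\frac{\overline{g}^{(j)}(\alpha)}{j!}(x-\alpha)^j$. -/

import Mathlib

open Finset Polynomial

/-- The `t`-th subresultant of `f` and `g` (of formal degrees `d` and `e`), defined as
the determinant of the `(d+e-2t) × (d+e-2t)` Sylvester-type matrix whose first `e-t`
rows contain the coefficients of `f` (shifted), last column `x^{e-t-1-r} f`, and whose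
last `d-t` rows contain the coefficients of `g` (shifted), last column `x^{d-t-1-r'} g`. -/
noncomputable def Sres {K : Type*} [CommRing K] (f g : Polynomial K) (d e t : ℕ) :
    Polynomial K :=
  Matrix.det (Matrix.of fun r c : Fin (d + e - 2 * t) =>
    if (r : ℕ) < e - t then
      if (c : ℕ) = d + e - 2 * t - 1 then X ^ (e - t - 1 - (r : ℕ)) * f
      else if (c : ℕ) ≤ d + (r : ℕ) then Polynomial.C (f.coeff (d + (r : ℕ) - (c : ℕ)))
      else 0
    else
      if (c : ℕ) = d + e - 2 * t - 1 then X ^ (d - t - 1 - ((r : ℕ) - (e - t))) * g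
      else if (c : ℕ) ≤ e + ((r : ℕ) - (e - t)) then
        Polynomial.C (g.coeff (e + ((r : ℕ) - (e - t)) - (c : ℕ)))
      else 0)

/-- Auxiliary: expansion of a determinant along an updated column. -/
lemma SresAux.det_updateCol_eq_sum {R : Type*} [CommRing R] {N : Type*} [DecidableEq N]
    [Fintype N] (B : Matrix N N R) (j : N) (w : N → R) :
    (B.updateCol j w).det = ∑ r, w r * (B.updateCol j (Pi.single r 1)).det := by
  have h1 : w = ∑ r, w r • (Pi.single r 1 : N → R) := by
    ext i; simp [Pi.single_apply, eq_comm]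
  rw [← Matrix.cramer_apply, h1, map_sum]
  simp [Matrix.cramer_apply, Finset.sum_apply, Pi.single_apply, mul_ite,
    Finset.sum_ite_eq', ← h1]

namespace SresAux

variable {K : Type*} [Field K] (α : K) (m k : ℕ) (g : Polynomial K)

/-- The scalar (coefficient) matrix underlying the subresultant matrix. -/
noncomputable def Amat : Matrix (Fin (k + 2)) (Fin (k + 2)) K :=
  Matrix.of fun r c =>
    if (r : ℕ) < k + 1 then
      (if (c : ℕ) ≤ m + 1 + (r : ℕ) then
        ((X - Polynomial.C α) ^ (m+1)).coeff (m + 1 + (r : ℕ) - (c : ℕ)) else 0)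
    else
      (if (c : ℕ) ≤ m + 1 + k + ((r : ℕ) - (k + 1)) then
        g.coeff (m + 1 + k + ((r : ℕ) - (k + 1)) - (c : ℕ)) else 0)

/-- The polynomial last column. -/
noncomputable def vcol : Fin (k + 2) → Polynomial K :=
  fun r => if (r : ℕ) < k + 1 then X ^ (k - (r : ℕ)) * (X - Polynomial.C α) ^ (m+1) else g

/-- Cofactors of the last column. -/
noncomputable def cof : Fin (k + 2) → K := fun r =>
  ((Amat α m k g).updateCol (Fin.last (k+1)) (Pi.single r 1)).det

lemma step1 :
    Sres ((X - Polynomial.C α) ^ (m+1)) g (m+1) (m+1+k) m =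
      ((((Polynomial.C : K →+* Polynomial K).mapMatrix (Amat α m k g)).updateCol
        (Fin.last (k+1)) (vcol α m k g)).det) := by
  have hN : (m+1) + (m+1+k) - 2 * m = k + 2 := by omega
  rw [Sres, ← Matrix.det_submatrix_equiv_self (finCongr hN)]
  congr 1
  refine Matrix.ext fun r c => ?_
  simp only [Matrix.submatrix_apply, Matrix.of_apply, finCongr_apply, Fin.coe_cast,
    Matrix.updateCol_apply, RingHom.mapMatrix_apply, Matrix.map_apply, Amat, vcol]
  have h1 : (m+1+k) - m = k + 1 := by omega
  have h2 : (m+1) + (m+1+k) - 2*m - 1 = k + 1 := by omega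
  have hc : (Fin.cast hN c = Fin.last (k+1)) ↔ (c : ℕ) = k + 1 := by
    rw [Fin.ext_iff]; simp
  rw [h1, h2]
  by_cases hr : (r : ℕ) < k + 1 <;> by_cases hcl : (c : ℕ) = k + 1 <;>
    simp [hr, hcl, hc, apply_ite Polynomial.C, Nat.add_sub_cancel]

lemma mapped_single (r : Fin (k+2)) :
    (((Polynomial.C : K →+* Polynomial K).mapMatrix (Amat α m k g)).updateCol
        (Fin.last (k+1)) (Pi.single r 1)).det = Polynomial.C (cof α m k g r) := by
  have : (((Polynomial.C : K →+* Polynomial K).mapMatrix (Amat α m k g)).updateCol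
        (Fin.last (k+1)) (Pi.single r 1)) =
      (Polynomial.C : K →+* Polynomial K).mapMatrix
        ((Amat α m k g).updateCol (Fin.last (k+1)) (Pi.single r 1)) := by
    refine Matrix.ext fun i c => ?_
    by_cases hcl : c = Fin.last (k+1) <;>
      simp [hcl, Matrix.updateCol_apply, Pi.single_apply, apply_ite Polynomial.C]
  rw [this, cof]
  exact (RingHom.map_det _ _).symm

lemma coflast : cof α m k g (Fin.last (k+1)) = 1 := by
  have hfm : ((X - Polynomial.C α) ^ (m+1)).Monic := (monic_X_sub_C α).pow _
  have hfd : ((X - Polynomial.C α) ^ (m+1)).natDegree = m + 1 := by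
    simp [natDegree_pow]
  rw [cof, Matrix.det_succ_column _ (Fin.last (k+1))]
  rw [Fintype.sum_eq_single (Fin.last (k+1)) ?side]
  case side =>
    intro i hi
    simp [Matrix.updateCol_apply, Pi.single_apply, hi]
  have hsub : ((Amat α m k g).updateCol (Fin.last (k+1))
      (Pi.single (Fin.last (k+1)) 1)).submatrix
      (Fin.last (k+1)).succAbove (Fin.last (k+1)).succAbove =
      Matrix.of (fun i j : Fin (k+1) =>
        if (j : ℕ) ≤ m + 1 + (i : ℕ) then
          ((X - Polynomial.C α) ^ (m+1)).coeff (m + 1 + (i : ℕ) - (j : ℕ)) else 0) := by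
    refine Matrix.ext fun i j => ?_
    simp [Fin.succAbove_last, Matrix.updateCol_apply, Amat,
      (Fin.castSucc_lt_last j).ne, (Fin.castSucc_lt_last i).le, Fin.castSucc_lt_last i]
    exact fun h => absurd h (by have := i.isLt; omega)
  rw [hsub]
  have htri : (Matrix.of (fun i j : Fin (k+1) =>
      if (j : ℕ) ≤ m + 1 + (i : ℕ) then
        ((X - Polynomial.C α) ^ (m+1)).coeff (m + 1 + (i : ℕ) - (j : ℕ)) else 0)).det = 1 := by
    rw [Matrix.det_of_upperTriangular]
    · rw [Finset.prod_congr rfl (g := fun _ => (1:K)) fun i _ => ?_, Finset.prod_const_one]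
      simp only [Matrix.of_apply, if_pos (by omega : (i:ℕ) ≤ m + 1 + (i:ℕ))]
      have : m + 1 + (i:ℕ) - (i:ℕ) = m + 1 := by omega
      rw [this]
      have h2 := hfm.coeff_natDegree
      rwa [hfd] at h2
    · intro i j hij
      have hij' : (j : ℕ) < (i : ℕ) := hij
      simp only [Matrix.of_apply]
      rw [if_pos (by omega : (j:ℕ) ≤ m + 1 + (i:ℕ))]
      exact Polynomial.coeff_eq_zero_of_natDegree_lt (by omega)
  rw [htri]
  simp [Matrix.updateCol_apply, Pi.single_apply, Fin.val_last]

lemma coeff_vanish (hge : g.natDegree = m+1+k) (j : ℕ) (hj : m + 1 ≤ j) :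
    (∑ r, vcol α m k g r * Polynomial.C (cof α m k g r)).coeff j = 0 := by
  have hfd : ((X - Polynomial.C α) ^ (m+1)).natDegree = m + 1 := by simp [natDegree_pow]
  rw [Polynomial.finset_sum_coeff]
  simp only [Polynomial.coeff_mul_C]
  by_cases hje : j ≤ m + 1 + k
  · set c' : Fin (k+2) := ⟨m + 1 + k - j, by omega⟩ with hc'
    have hvc : ∀ r, (vcol α m k g r).coeff j = Amat α m k g r c' := by
      intro r
      have hcval : (c' : ℕ) = m + 1 + k - j := rfl
      rw [vcol, Amat]
      by_cases hr : (r:ℕ) < k+1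
      · rw [if_pos hr, Matrix.of_apply, if_pos hr, mul_comm, Polynomial.coeff_mul_X_pow']
        by_cases h2 : k - (r:ℕ) ≤ j
        · rw [if_pos h2, if_pos (by rw [hcval]; omega)]
          congr 1
          rw [hcval]; omega
        · rw [if_neg h2, if_neg (by rw [hcval]; omega)]
      · rw [if_neg hr, Matrix.of_apply, if_neg hr, if_pos (by rw [hcval]; omega)]
        have hr' : (r : ℕ) = k + 1 := by omega
        congr 1
        rw [hcval, hr']; omega
    calc ∑ r, (vcol α m k g r).coeff j * cof α m k g r
        = ∑ r, Amat α m k g r c' * cof α m k g r := by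
          exact Finset.sum_congr rfl fun r _ => by rw [hvc r]
      _ = ((Amat α m k g).updateCol (Fin.last (k+1)) (fun r => Amat α m k g r c')).det := by
          rw [det_updateCol_eq_sum]
          rfl
      _ = 0 := by
          have hne : c' ≠ Fin.last (k+1) :=
            Fin.ne_of_val_ne (show m + 1 + k - j ≠ k + 1 by omega)
          apply Matrix.det_zero_of_column_eq (i := c') (j := Fin.last (k+1)) hne
          intro i
          rw [Matrix.updateCol_apply, Matrix.updateCol_apply]
          rw [if_neg hne, if_pos rfl]
  · refine Finset.sum_eq_zero fun r _ => ?_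
    have hz : (vcol α m k g r).coeff j = 0 := by
      rw [vcol]
      by_cases hr : (r:ℕ) < k+1
      · rw [if_pos hr, mul_comm, Polynomial.coeff_mul_X_pow', if_pos (by omega)]
        exact Polynomial.coeff_eq_zero_of_natDegree_lt (by rw [hfd]; omega)
      · rw [if_neg hr]
        exact Polynomial.coeff_eq_zero_of_natDegree_lt (by rw [hge]; omega)
    simp [hz]

variable [CharZero K]

lemma taylor_coeff_eq (j : ℕ) :
    Polynomial.eval α (Polynomial.derivative^[j] g) / (j.factorial : K) =
      ((taylor α g).coeff j) := by
  rw [Polynomial.taylor_coeff]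
  have h2 : Polynomial.derivative^[j] g = j.factorial • ((Polynomial.hasseDeriv j) g) := by
    rw [← Polynomial.factorial_smul_hasseDeriv]; rfl
  rw [h2, nsmul_eq_mul, Polynomial.eval_mul, Polynomial.eval_natCast,
    mul_div_cancel_left₀]
  exact_mod_cast j.factorial_ne_zero

lemma g_sub_T (hge : g.natDegree = m + 1 + k) :
    (X - Polynomial.C α) ^ (m+1) ∣
      g - ∑ j ∈ Finset.range (m+1),
        Polynomial.C ((taylor α g).coeff j) * (X - Polynomial.C α) ^ j := by
  have hgsum : g = ∑ j ∈ Finset.range (m+1+k+1),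
      Polynomial.C ((taylor α g).coeff j) * (X - Polynomial.C α) ^ j := by
    conv_lhs => rw [← Polynomial.sum_taylor_eq g α]
    rw [Polynomial.sum_over_range' _ (fun n => by simp) (m+1+k+1)
      (by rw [Polynomial.natDegree_taylor, hge]; omega)]
  nth_rewrite 1 [hgsum]
  rw [← Finset.sum_Ico_eq_sub _ (by omega : m + 1 ≤ m + 1 + k + 1)]
  refine Finset.dvd_sum fun j hj => ?_
  rw [Finset.mem_Ico] at hj
  exact Dvd.dvd.mul_left (pow_dvd_pow _ hj.1) _

lemma T_deg :
    (∑ j ∈ Finset.range (m+1),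
        Polynomial.C ((taylor α g).coeff j) * (X - Polynomial.C α) ^ j).degree
      < ((m+1 : ℕ) : WithBot ℕ) := by
  rw [Polynomial.degree_lt_iff_coeff_zero]
  intro i hi
  rw [Polynomial.finset_sum_coeff]
  refine Finset.sum_eq_zero fun j hj => ?_
  rw [Finset.mem_range] at hj
  apply Polynomial.coeff_eq_zero_of_natDegree_lt
  calc (Polynomial.C ((taylor α g).coeff j) * (X - Polynomial.C α) ^ j).natDegree
      ≤ ((X - Polynomial.C α) ^ j).natDegree := Polynomial.natDegree_C_mul_le _ _
    _ = j := by rw [Polynomial.natDegree_pow, Polynomial.natDegree_X_sub_C, mul_one]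
    _ < i := by omega

end SresAux

/-- `Sres_{d-1}((x-α)^d, ḡ)` is the truncated Taylor expansion of `ḡ` at `α`:
`∑_{j<d} (ḡ^{(j)}(α)/j!) (x-α)^j`. -/
theorem sres_dsub1_taylor {K : Type*} [Field K] [CharZero K]
    (α : K) (d e : ℕ) (hdpos : 0 < d) (hde : d - 1 < e)
    (g : Polynomial K) (hg : g.Monic) (hge : g.natDegree = e) :
    Sres ((X - Polynomial.C α) ^ d) g d e (d - 1) =
      ∑ j ∈ Finset.range d,
        Polynomial.C (Polynomial.eval α (Polynomial.derivative^[j] g) / (j.factorial : K)) *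
          (X - Polynomial.C α) ^ j := by
  open SresAux in
  obtain ⟨m, rfl⟩ : ∃ m, d = m + 1 := ⟨d - 1, by omega⟩
  obtain ⟨k, rfl⟩ : ∃ k, e = m + 1 + k := ⟨e - (m + 1), by omega⟩
  simp only [Nat.add_sub_cancel]
  set f : Polynomial K := (X - Polynomial.C α) ^ (m+1) with hf
  have hfm : f.Monic := (monic_X_sub_C α).pow _
  have hfdeg : f.degree = ((m+1 : ℕ) : WithBot ℕ) := by
    rw [Polynomial.degree_eq_natDegree hfm.ne_zero]
    norm_cast
    simp [hf, natDegree_pow]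
  set T : Polynomial K := ∑ j ∈ Finset.range (m+1),
    Polynomial.C ((taylor α g).coeff j) * (X - Polynomial.C α) ^ j with hT
  have hRHS : (∑ j ∈ Finset.range (m+1),
      Polynomial.C (Polynomial.eval α (Polynomial.derivative^[j] g) / (j.factorial : K)) *
        (X - Polynomial.C α) ^ j) = T := by
    refine Finset.sum_congr rfl fun j _ => ?_
    rw [SresAux.taylor_coeff_eq]
  have hS : Sres f g (m+1) (m+1+k) m = ∑ r, SresAux.vcol α m k g r *
      Polynomial.C (SresAux.cof α m k g r) := by
    rw [hf, SresAux.step1 α m k g, SresAux.det_updateCol_eq_sum]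
    exact Finset.sum_congr rfl fun r _ => by rw [SresAux.mapped_single]
  have hdegS : (Sres f g (m+1) (m+1+k) m).degree < f.degree := by
    rw [hfdeg, Polynomial.degree_lt_iff_coeff_zero]
    intro i hi
    rw [hS]
    exact SresAux.coeff_vanish α m k g hge i hi
  have hdvd1 : f ∣ Sres f g (m+1) (m+1+k) m - g := by
    rw [hS, Fin.sum_univ_castSucc]
    have hlast : SresAux.vcol α m k g (Fin.last (k+1)) *
        Polynomial.C (SresAux.cof α m k g (Fin.last (k+1))) = g := by
      rw [SresAux.coflast, map_one, mul_one, SresAux.vcol]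
      rw [if_neg (by simp)]
    rw [hlast, add_sub_cancel_right]
    refine Finset.dvd_sum fun i _ => ?_
    have hv : SresAux.vcol α m k g (Fin.castSucc i) = X ^ (k - (i:ℕ)) * f := by
      rw [SresAux.vcol, if_pos (by simpa using i.isLt)]
      simp [Fin.coe_castSucc, hf]
    rw [hv]
    exact Dvd.dvd.mul_right (dvd_mul_left f _) _
  have key : Sres f g (m+1) (m+1+k) m = T := by
    have h1 : Sres f g (m+1) (m+1+k) m %ₘ f = Sres f g (m+1) (m+1+k) m :=
      (Polynomial.modByMonic_eq_self_iff hfm).mpr hdegS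
    have h2 : Sres f g (m+1) (m+1+k) m %ₘ f = g %ₘ f :=
      Polynomial.modByMonic_eq_of_dvd_sub hfm hdvd1
    have h3 : g %ₘ f = T %ₘ f :=
      Polynomial.modByMonic_eq_of_dvd_sub hfm (SresAux.g_sub_T α m k g hge)
    have h4 : T %ₘ f = T := (Polynomial.modByMonic_eq_self_iff hfm).mpr
      (by rw [hfdeg]; exact SresAux.T_deg α m g)
    rw [← h1, h2, h3, h4]
  rw [key, ← hRHS]
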